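/- arXiv:quant-ph/0608063 — 2 statements merged into one kernel-verified Lean document; each statement's English description precedes it below -/
import Mathlib

section
/- Let v be a nonzero vector of F_4^n and, for 1 ≤ k ≤ n, let σ_k be the number of self-orthogonal additive codes over F_4 of length n and F_2-dimension k containing v. Then σ_k = ∏_{i=1}^{k-1} (2^{2(n−i)} − 1)/(2^i − 1). -/
abbrev F4 := GaloisField 2 2

/-- The trace inner product on F_4^n (its values lie in the subfield F_2). -/
noncomputable def trF {n : ℕ} (u v : Fin n → F4) : F4 :=
  ∑ i, (u i * v i ^ 2 + u i ^ 2 * v i)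

/-- An additive code (F_2-subspace of F_4^n) is self-orthogonal if it is
contained in its trace-dual. -/
def SelfOrth {n : ℕ} (C : Submodule (ZMod 2) (Fin n → F4)) : Prop :=
  ∀ u ∈ C, ∀ v ∈ C, trF u v = 0

open Module Finset

noncomputable instance : Fintype F4 := Fintype.ofFinite F4

lemma F4.card : Fintype.card F4 = 4 := by
  have := GaloisField.card 2 2 (by norm_num); simpa [Nat.card_eq_fintype_card] using this

lemma F4.pow4 (x : F4) : x ^ 4 = x := by
  have h := FiniteField.pow_card x; rwa [F4.card] at h

variable {n : ℕ}

lemma trF_comm (u v : Fin n → F4) : trF u v = trF v u := by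
  unfold trF; congr 1; ext i; ring

lemma trF_add_left (u u' v : Fin n → F4) : trF (u + u') v = trF u v + trF u' v := by
  unfold trF
  rw [← Finset.sum_add_distrib]
  congr 1; ext i
  simp only [Pi.add_apply, CharTwo.add_sq]; ring

lemma trF_self (u : Fin n → F4) : trF u u = 0 := by
  unfold trF
  apply Finset.sum_eq_zero
  intro i _
  have : u i * u i ^ 2 + u i ^ 2 * u i = u i ^ 3 + u i ^ 3 := by ring
  rw [this, CharTwo.add_self_eq_zero]

lemma trF_sq (u v : Fin n → F4) : trF u v ^ 2 = trF u v := by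
  unfold trF
  rw [CharTwo.sum_sq]
  congr 1; ext i
  have h4 : ∀ x : F4, (x ^ 2) ^ 2 = x := by intro x; rw [← pow_mul]; exact F4.pow4 x
  rw [CharTwo.add_sq, mul_pow, mul_pow, h4, h4]
  ring

lemma trF_smul_left (c : ZMod 2) (u v : Fin n → F4) : trF (c • u) v = c • trF u v := by
  fin_cases c
  · show trF ((0 : ZMod 2) • u) v = (0 : ZMod 2) • trF u v
    rw [zero_smul, zero_smul]
    unfold trF; simp
  · show trF ((1 : ZMod 2) • u) v = (1 : ZMod 2) • trF u v
    rw [one_smul, one_smul]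

open Classical in
noncomputable def B0 {n : ℕ} (u v : Fin n → F4) : ZMod 2 :=
  if trF u v = 0 then 0 else 1

lemma emb_B0 (u v : Fin n → F4) : algebraMap (ZMod 2) F4 (B0 u v) = trF u v := by
  unfold B0
  split_ifs with h
  · simp [h]
  · have h0 := trF_sq u v
    have h1 : trF u v * (trF u v - 1) = 0 := by
      have : trF u v * (trF u v - 1) = trF u v ^ 2 - trF u v := by ring
      rw [this, h0, sub_self]
    rcases mul_eq_zero.1 h1 with h2 | h2
    · exact absurd h2 h
    · simp [sub_eq_zero.1 h2]

lemma emb_inj : Function.Injective (algebraMap (ZMod 2) F4) :=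
  (algebraMap (ZMod 2) F4).injective

/-- the F2-valued version of the trace form -/
noncomputable def Btr (n : ℕ) : LinearMap.BilinForm (ZMod 2) (Fin n → F4) :=
  LinearMap.mk₂ (ZMod 2) B0
    (fun u u' v => emb_inj (by
      rw [emb_B0, map_add, emb_B0, emb_B0, trF_add_left]))
    (fun c u v => emb_inj (by
      rw [emb_B0, trF_smul_left, Algebra.smul_def, smul_eq_mul, map_mul, emb_B0]))
    (fun u v v' => emb_inj (by
      rw [emb_B0, map_add, emb_B0, emb_B0, trF_comm, trF_add_left, trF_comm u v, trF_comm u v']))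
    (fun c u v => emb_inj (by
      rw [emb_B0, trF_comm, trF_smul_left, Algebra.smul_def, smul_eq_mul, map_mul, emb_B0,
        trF_comm]))

lemma Btr_apply (u v : Fin n → F4) : Btr n u v = B0 u v := rfl

lemma Btr_eq_zero_iff (u v : Fin n → F4) : Btr n u v = 0 ↔ trF u v = 0 := by
  rw [Btr_apply]
  constructor
  · intro h
    have := emb_B0 u v
    rw [h, map_zero] at this
    exact this.symm
  · intro h
    apply emb_inj
    rw [emb_B0, h, map_zero]

lemma Btr_isSymm : (Btr n).IsSymm := by
  rw [LinearMap.BilinForm.isSymm_iff]; refine ⟨fun u v => ?_⟩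
  simp only [RingHom.id_apply]
  apply emb_inj
  show algebraMap (ZMod 2) F4 (B0 u v) = algebraMap (ZMod 2) F4 (B0 v u)
  rw [emb_B0, emb_B0, trF_comm]

lemma Btr_isRefl : (Btr n).IsRefl := Btr_isSymm.isRefl

lemma Btr_nondegenerate : (Btr n).Nondegenerate := by
  classical
  refine LinearMap.BilinForm.Nondegenerate.ofSeparatingLeft ?_
  intro u hu
  by_contra h0
  obtain ⟨i, hi⟩ : ∃ i, u i ≠ 0 := by
    by_contra hc
    push_neg at hc
    exact h0 (funext hc)
  obtain ⟨c, hc0, hcu⟩ : ∃ c : F4, c ≠ 0 ∧ c ≠ u i := by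
    by_contra hc
    push_neg at hc
    have hsub : (Finset.univ : Finset F4) ⊆ {0, u i} := by
      intro x _
      rcases eq_or_ne x 0 with h | h
      · simp [h]
      · simp [hc x h]
    have := Finset.card_le_card hsub
    rw [Finset.card_univ, F4.card] at this
    have h2 : ({0, u i} : Finset F4).card ≤ 2 :=
      (Finset.card_insert_le _ _).trans (by simp)
    omega
  have hv := hu (Pi.single i c)
  rw [Btr_eq_zero_iff] at hv
  have hsingle : trF u (Pi.single i c) = u i * c ^ 2 + u i ^ 2 * c := by
    unfold trF
    rw [Finset.sum_eq_single i]
    · rw [Pi.single_eq_same]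
    · intro j _ hj
      rw [Pi.single_eq_of_ne hj]
      ring
    · intro h; exact absurd (Finset.mem_univ i) h
  rw [hsingle] at hv
  have : u i * c * (c + u i) = 0 := by rw [← hv]; ring
  rcases mul_eq_zero.1 this with h | h
  · rcases mul_eq_zero.1 h with h | h
    · exact hi h
    · exact hc0 h
  · have : c = u i := by
      have h2 : c = -(u i) := eq_neg_of_add_eq_zero_left h
      rwa [CharTwo.neg_eq] at h2
    exact hcu this

section Setup
variable {n : ℕ}

abbrev Vn (n : ℕ) := Fin n → F4

noncomputable instance : Fintype (Vn n) := inferInstance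

instance : Module.Finite (ZMod 2) (Vn n) := Module.Finite.of_finite

lemma finrank_Vn : Module.finrank (ZMod 2) (Vn n) = 2 * n := by
  have h1 : Module.finrank (ZMod 2) F4 = 2 := GaloisField.finrank 2 (by norm_num)
  rw [Module.finrank_pi_fintype]
  simp [h1, Finset.sum_const, mul_comm]

lemma card_submodule (W : Submodule (ZMod 2) (Vn n)) :
    Nat.card W = 2 ^ Module.finrank (ZMod 2) W := by
  haveI : Fintype W := Fintype.ofFinite W
  have h := card_eq_pow_finrank (K := ZMod 2) (V := W)
  rw [Nat.card_eq_fintype_card, h, ZMod.card]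

lemma selfOrth_iff (C : Submodule (ZMod 2) (Vn n)) :
    SelfOrth C ↔ C ≤ (Btr n).orthogonal C := by
  constructor
  · intro h x hx
    rw [LinearMap.BilinForm.mem_orthogonal_iff]
    intro y hy
    exact (Btr_eq_zero_iff y x).2 (h y hy x hx)
  · intro h u hu v hv
    have := LinearMap.BilinForm.mem_orthogonal_iff.1 (h hv) u hu
    exact (Btr_eq_zero_iff u v).1 this

end Setup

variable {M : Type*} [AddCommGroup M] [Module (ZMod 2) M] [Finite M]

lemma zmod2_card_module : Nat.card M = 2 ^ Module.finrank (ZMod 2) M := by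
  haveI : Fintype M := Fintype.ofFinite M
  have h := card_eq_pow_finrank (K := ZMod 2) (V := M)
  rw [Nat.card_eq_fintype_card, h, ZMod.card]

lemma zmod2_card_nonzero : Nat.card {x : M // x ≠ 0} = 2 ^ Module.finrank (ZMod 2) M - 1 := by
  classical
  haveI : Fintype M := Fintype.ofFinite M
  have h1 : Nat.card {x : M // x ≠ 0} = Fintype.card {x : M // x ≠ 0} := Nat.card_eq_fintype_card
  rw [h1]
  have h2 : Fintype.card {x : M // ¬ (x = 0)} = Fintype.card M - Fintype.card {x : M // x = 0} :=
    Fintype.card_subtype_compl _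
  rw [h2, Fintype.card_subtype_eq]
  have := zmod2_card_module (M := M)
  rw [Nat.card_eq_fintype_card] at this
  rw [this]

/-- nonzero functionals vanishing at a fixed nonzero vector -/
lemma card_functionals (v : M) (hv : v ≠ 0) :
    Nat.card {f : Module.Dual (ZMod 2) M // f ≠ 0 ∧ f v = 0}
      = 2 ^ (Module.finrank (ZMod 2) M - 1) - 1 := by
  haveI : Module.Finite (ZMod 2) M := Module.Finite.of_finite
  haveI : Finite (Module.Dual (ZMod 2) M) :=
    Finite.of_injective (fun f => (f : M → ZMod 2)) DFunLike.coe_injective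
  set ev : Module.Dual (ZMod 2) M →ₗ[ZMod 2] ZMod 2 :=
    { toFun := fun f => f v, map_add' := by intros; rfl, map_smul' := by intros; rfl } with hev
  have hsurj : Function.Surjective ev := by
    have hne : ∃ f : Module.Dual (ZMod 2) M, f v ≠ 0 := by
      by_contra hc
      push_neg at hc
      exact hv ((Module.forall_dual_apply_eq_zero_iff (ZMod 2) v).1 hc)
    obtain ⟨f, hf⟩ := hne
    intro c
    fin_cases c
    · exact ⟨0, rfl⟩
    · refine ⟨f, ?_⟩
      show f v = 1
      have : ∀ a : ZMod 2, a ≠ 0 → a = 1 := by decide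
      exact this _ hf
  have hker : Module.finrank (ZMod 2) (LinearMap.ker ev) = Module.finrank (ZMod 2) M - 1 := by
    have h1 := LinearMap.finrank_range_add_finrank_ker ev
    rw [LinearMap.range_eq_top.2 hsurj, finrank_top, Module.finrank_self] at h1
    have h2 : Module.finrank (ZMod 2) (Module.Dual (ZMod 2) M) = Module.finrank (ZMod 2) M :=
      Subspace.dual_finrank_eq
    omega
  have hequiv : {f : Module.Dual (ZMod 2) M // f ≠ 0 ∧ f v = 0}
      ≃ {g : LinearMap.ker ev // g ≠ 0} := by
    refine ⟨fun f => ⟨⟨f.1, ?_⟩, ?_⟩, fun g => ⟨g.1.1, ?_, ?_⟩, fun _ => rfl, fun _ => rfl⟩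
    · exact LinearMap.mem_ker.2 f.2.2
    · intro hc
      apply f.2.1
      exact congrArg Subtype.val hc
    · intro hc
      apply g.2
      exact Subtype.ext hc
    · exact LinearMap.mem_ker.1 g.1.2
  rw [Nat.card_congr hequiv, zmod2_card_nonzero (M := LinearMap.ker ev), hker]

lemma card_hyperplanes (v : M) (hv : v ≠ 0) :
    Nat.card {C : Submodule (ZMod 2) M //
        Module.finrank (ZMod 2) C = Module.finrank (ZMod 2) M - 1 ∧ v ∈ C}
      = 2 ^ (Module.finrank (ZMod 2) M - 1) - 1 := by
  haveI : Module.Finite (ZMod 2) M := Module.Finite.of_finite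
  haveI : Nontrivial M := nontrivial_of_ne v 0 hv
  have hm : 1 ≤ Module.finrank (ZMod 2) M := Module.finrank_pos
  haveI : IsSimpleOrder (Submodule (ZMod 2) (ZMod 2)) :=
    is_simple_module_of_finrank_eq_one (K := ZMod 2) (Module.finrank_self _)
  have hrange : ∀ f : Module.Dual (ZMod 2) M, f ≠ 0 → LinearMap.range f = ⊤ := by
    intro f hf
    rcases (eq_bot_or_eq_top (LinearMap.range f)) with h | h
    · exact absurd (LinearMap.range_eq_bot.1 h) hf
    · exact h
  have hkerrank : ∀ f : Module.Dual (ZMod 2) M, f ≠ 0 →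
      Module.finrank (ZMod 2) (LinearMap.ker f) = Module.finrank (ZMod 2) M - 1 := by
    intro f hf
    have h1 := LinearMap.finrank_range_add_finrank_ker f
    rw [hrange f hf, finrank_top, Module.finrank_self] at h1
    omega
  set Φ : {f : Module.Dual (ZMod 2) M // f ≠ 0 ∧ f v = 0} →
      {C : Submodule (ZMod 2) M //
        Module.finrank (ZMod 2) C = Module.finrank (ZMod 2) M - 1 ∧ v ∈ C} :=
    fun f => ⟨LinearMap.ker f.1, hkerrank f.1 f.2.1, LinearMap.mem_ker.2 f.2.2⟩ with hΦ
  have hbij : Function.Bijective Φ := by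
    constructor
    · rintro ⟨f, hf0, hfv⟩ ⟨g, hg0, hgv⟩ h
      have hker : LinearMap.ker f = LinearMap.ker g := congrArg Subtype.val h
      apply Subtype.ext
      ext x
      by_cases hx : f x = 0
      · have hx' : x ∈ LinearMap.ker g := hker ▸ LinearMap.mem_ker.2 hx
        rw [hx, LinearMap.mem_ker.1 hx']
      · have hgx : g x ≠ 0 := by
          intro hc
          exact hx (LinearMap.mem_ker.1 (hker ▸ LinearMap.mem_ker.2 hc))
        have h2 : ∀ a : ZMod 2, a ≠ 0 → a = 1 := by decide
        rw [h2 _ hx, h2 _ hgx]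
    · rintro ⟨C, hC, hvC⟩
      have hq : Module.finrank (ZMod 2) (M ⧸ C) = 1 := by
        have := Submodule.finrank_quotient_add_finrank C
        omega
      obtain ⟨e⟩ := FiniteDimensional.nonempty_linearEquiv_of_finrank_eq
        (R := ZMod 2) (M := M ⧸ C) (M' := ZMod 2) (by rw [hq, Module.finrank_self])
      set f : Module.Dual (ZMod 2) M := e.toLinearMap ∘ₗ C.mkQ with hf
      have hkf : LinearMap.ker f = C := by
        rw [hf, LinearMap.ker_comp, LinearEquiv.ker, Submodule.comap_bot, Submodule.ker_mkQ]
      have hf0 : f ≠ 0 := by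
        intro hc
        have : LinearMap.ker f = ⊤ := by rw [hc]; exact LinearMap.ker_zero
        rw [hkf] at this
        have h3 : Module.finrank (ZMod 2) C = Module.finrank (ZMod 2) M := by
          rw [this, finrank_top]
        omega
      refine ⟨⟨f, hf0, ?_⟩, ?_⟩
      · rw [← LinearMap.mem_ker, hkf]; exact hvC
      · apply Subtype.ext
        exact hkf
  rw [← Nat.card_congr (Equiv.ofBijective Φ hbij), card_functionals v hv]

lemma card_hyperplanes_in {V : Type*} [AddCommGroup V] [Module (ZMod 2) V] [Finite V]
    (U : Submodule (ZMod 2) V) (v : V) (hvU : v ∈ U) (hv : v ≠ 0) :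
    Nat.card {C : Submodule (ZMod 2) V //
        C ≤ U ∧ Module.finrank (ZMod 2) C = Module.finrank (ZMod 2) U - 1 ∧ v ∈ C}
      = 2 ^ (Module.finrank (ZMod 2) U - 1) - 1 := by
  have hv' : (⟨v, hvU⟩ : U) ≠ 0 := by
    intro hc
    exact hv (congrArg Subtype.val hc)
  set Ψ : {C' : Submodule (ZMod 2) U //
        Module.finrank (ZMod 2) C' = Module.finrank (ZMod 2) U - 1 ∧ (⟨v, hvU⟩ : U) ∈ C'} →
      {C : Submodule (ZMod 2) V //
        C ≤ U ∧ Module.finrank (ZMod 2) C = Module.finrank (ZMod 2) U - 1 ∧ v ∈ C} :=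
    fun C' => ⟨C'.1.map U.subtype,
      Submodule.map_subtype_le U C'.1,
      by rw [Submodule.finrank_map_subtype_eq]; exact C'.2.1,
      Submodule.mem_map.2 ⟨⟨v, hvU⟩, C'.2.2, rfl⟩⟩ with hΨ
  have hbij : Function.Bijective Ψ := by
    constructor
    · rintro ⟨C1, h1⟩ ⟨C2, h2⟩ h
      apply Subtype.ext
      have := congrArg Subtype.val h
      exact Submodule.map_injective_of_injective U.injective_subtype this
    · rintro ⟨C, hCU, hCr, hvC⟩
      refine ⟨⟨C.comap U.subtype, ?_, ?_⟩, ?_⟩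
      · have hmc : (C.comap U.subtype).map U.subtype = C := by
          rw [Submodule.map_comap_subtype, inf_of_le_right hCU]
        rw [← Submodule.finrank_map_subtype_eq U (C.comap U.subtype), hmc]
        exact hCr
      · exact Submodule.mem_comap.2 hvC
      · apply Subtype.ext
        show (C.comap U.subtype).map U.subtype = C
        rw [Submodule.map_comap_subtype, inf_of_le_right hCU]
  rw [← Nat.card_congr (Equiv.ofBijective Ψ hbij)]
  exact card_hyperplanes (M := U) _ hv'

variable {V : Type*} [AddCommGroup V] [Module (ZMod 2) V] [Finite V] [Fintype V] [DecidableEq V]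

lemma card_diff_filter (C W : Submodule (ZMod 2) V) (hCW : C ≤ W)
    [DecidablePred (· ∈ W)] [DecidablePred (· ∈ C)] :
    (Finset.univ.filter (fun x => x ∈ W ∧ x ∉ C)).card
      = 2 ^ Module.finrank (ZMod 2) W - 2 ^ Module.finrank (ZMod 2) C := by
  classical
  have key := Finset.card_filter_add_card_filter_not
    (s := Finset.univ.filter (· ∈ W)) (p := (· ∈ C))
  have h1 : ((Finset.univ.filter (· ∈ W)).filter (· ∈ C)) = Finset.univ.filter (· ∈ C) := by
    ext x; simp only [Finset.mem_filter, Finset.mem_univ, true_and]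
    exact ⟨fun h => h.2, fun h => ⟨hCW h, h⟩⟩
  have h2 : ((Finset.univ.filter (· ∈ W)).filter (fun x => ¬ x ∈ C))
      = Finset.univ.filter (fun x => x ∈ W ∧ x ∉ C) := by
    ext x; simp only [Finset.mem_filter, Finset.mem_univ, true_and]
  have hW : (Finset.univ.filter (· ∈ W)).card = 2 ^ Module.finrank (ZMod 2) W := by
    rw [← Fintype.card_subtype]
    have : Nat.card {x // x ∈ W} = 2 ^ Module.finrank (ZMod 2) W := by
      haveI : Module.Finite (ZMod 2) (↥W) := Module.Finite.of_finite
      exact zmod2_card_module (M := ↥W)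
    rwa [Nat.card_eq_fintype_card] at this
  have hC : (Finset.univ.filter (· ∈ C)).card = 2 ^ Module.finrank (ZMod 2) C := by
    rw [← Fintype.card_subtype]
    have : Nat.card {x // x ∈ C} = 2 ^ Module.finrank (ZMod 2) C := by
      exact zmod2_card_module (M := ↥C)
    rwa [Nat.card_eq_fintype_card] at this
  rw [h1, h2, hW, hC] at key
  omega
section Ext
open Module Finset LinearMap
variable {n : ℕ}

noncomputable instance : Fintype (Submodule (ZMod 2) (Vn n)) := by
  classical
  exact Fintype.ofFinite _

lemma finrank_orth (C : Submodule (ZMod 2) (Vn n)) :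
    Module.finrank (ZMod 2) ((Btr n).orthogonal C)
      = 2 * n - Module.finrank (ZMod 2) C := by
  rw [LinearMap.BilinForm.finrank_orthogonal Btr_nondegenerate, finrank_Vn]

lemma Btr_symm_apply (x y : Vn n) : Btr n x y = Btr n y x := by
  have := (Btr_isSymm (n := n)).eq x y
  simpa using this

lemma extension_count (j : ℕ) (C : Submodule (ZMod 2) (Vn n)) (hC : SelfOrth C)
    (hCr : Module.finrank (ZMod 2) C = j) :
    Nat.card {D : Submodule (ZMod 2) (Vn n) //
        SelfOrth D ∧ Module.finrank (ZMod 2) D = j + 1 ∧ C ≤ D} * 2 ^ j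
      = 2 ^ (2 * n - j) - 2 ^ j := by
  classical
  set B := Btr n with hB
  set W := B.orthogonal C with hW
  have hCW : C ≤ W := (selfOrth_iff C).1 hC
  set s : Finset (Vn n) := Finset.univ.filter (fun x => x ∈ W ∧ x ∉ C) with hs
  set t : Finset (Submodule (ZMod 2) (Vn n)) := Finset.univ.filter
    (fun D => SelfOrth D ∧ Module.finrank (ZMod 2) D = j + 1 ∧ C ≤ D) with ht
  set g : Vn n → Submodule (ZMod 2) (Vn n) := fun w => C ⊔ Submodule.span (ZMod 2) {w} with hg
  -- membership in W characterization
  have hmemW : ∀ x, x ∈ W ↔ ∀ y ∈ C, B y x = 0 := by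
    intro x; exact LinearMap.BilinForm.mem_orthogonal_iff
  -- rank of extensions
  have hrank_sup : ∀ x : Vn n, x ∉ C →
      Module.finrank (ZMod 2) ↥(C ⊔ Submodule.span (ZMod 2) {x}) = j + 1 := by
    intro x hxC
    have hx0 : x ≠ 0 := fun h => hxC (h ▸ C.zero_mem)
    have hinf : C ⊓ Submodule.span (ZMod 2) {x} = ⊥ := by
      rw [eq_bot_iff]
      intro z hz
      obtain ⟨hzC, hzs⟩ := hz
      obtain ⟨c, hc⟩ := Submodule.mem_span_singleton.1 hzs
      have hc01 : ∀ a : ZMod 2, a = 0 ∨ a = 1 := by decide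
      rcases hc01 c with h0 | h0 <;> subst h0
      · rw [zero_smul] at hc
        rw [← hc]; exact Submodule.mem_bot _ |>.2 rfl
      · rw [one_smul] at hc
        exact absurd (hc ▸ hzC) hxC
    have := Submodule.finrank_sup_add_finrank_inf_eq C (Submodule.span (ZMod 2) {x})
    rw [hinf, finrank_bot, finrank_span_singleton hx0, hCr] at this
    omega
  -- claim 1 : g maps s into t
  have claim1 : ∀ w ∈ s, g w ∈ t := by
    intro w hw
    rw [hs, Finset.mem_filter] at hw
    obtain ⟨-, hwW, hwC⟩ := hw
    have hw0 : w ≠ 0 := fun h => hwC (h ▸ C.zero_mem)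
    rw [ht, Finset.mem_filter]
    refine ⟨Finset.mem_univ _, ?_, ?_, le_sup_left⟩
    · -- SelfOrth (g w)
      rw [selfOrth_iff]
      apply sup_le
      · -- C ≤ orth (g w)
        intro c hc
        rw [LinearMap.BilinForm.mem_orthogonal_iff]
        intro y hy
        have hyk : y ∈ LinearMap.ker (B.flip c) := by
          revert y hy
          rw [← SetLike.le_def]
          apply sup_le
          · intro z hz
            rw [LinearMap.mem_ker]
            show B z c = 0
            rw [Btr_eq_zero_iff]
            exact hC z hz c hc
          · rw [Submodule.span_le, Set.singleton_subset_iff]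
            rw [SetLike.mem_coe, LinearMap.mem_ker]
            show B w c = 0
            rw [Btr_symm_apply]
            exact ((hmemW w).1 hwW) c hc
        exact LinearMap.mem_ker.1 hyk
      · -- span w ≤ orth (g w)
        rw [Submodule.span_le, Set.singleton_subset_iff, SetLike.mem_coe]
        rw [LinearMap.BilinForm.mem_orthogonal_iff]
        intro y hy
        have hyk : y ∈ LinearMap.ker (B.flip w) := by
          revert y hy
          rw [← SetLike.le_def]
          apply sup_le
          · intro z hz
            rw [LinearMap.mem_ker]
            exact ((hmemW w).1 hwW) z hz
          · rw [Submodule.span_le, Set.singleton_subset_iff]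
            rw [SetLike.mem_coe, LinearMap.mem_ker]
            show B w w = 0
            rw [Btr_eq_zero_iff]
            exact trF_self w
        exact LinearMap.mem_ker.1 hyk
    · -- finrank
      exact hrank_sup w hwC
  -- claim 2 : fibers over t are D \ C
  have claim2 : ∀ D ∈ t, (s.filter (fun w => g w = D))
      = Finset.univ.filter (fun x => x ∈ D ∧ x ∉ C) := by
    intro D hD
    rw [ht, Finset.mem_filter] at hD
    obtain ⟨-, hDso, hDr, hCD⟩ := hD
    ext x
    simp only [hs, Finset.filter_filter, Finset.mem_filter, Finset.mem_univ, true_and]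
    constructor
    · rintro ⟨⟨hxW, hxC⟩, hgx⟩
      refine ⟨?_, hxC⟩
      rw [← hgx]
      exact Submodule.mem_sup_right (Submodule.mem_span_singleton_self x)
    · rintro ⟨hxD, hxC⟩
      have hxW : x ∈ W := by
        rw [hmemW]
        intro y hy
        rw [Btr_eq_zero_iff]
        exact hDso y (hCD hy) x hxD
      refine ⟨⟨hxW, hxC⟩, ?_⟩
      show C ⊔ Submodule.span (ZMod 2) {x} = D
      apply Submodule.eq_of_le_of_finrank_le
      · apply sup_le hCD
        rw [Submodule.span_le, Set.singleton_subset_iff]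
        exact hxD
      · rw [hDr, hrank_sup x hxC]
  -- conclusion
  have hcount := Finset.card_eq_sum_card_fiberwise claim1
  have hfib : ∀ D ∈ t, (s.filter (fun w => g w = D)).card = 2 ^ j := by
    intro D hD
    have hD' := hD
    rw [ht, Finset.mem_filter] at hD'
    obtain ⟨-, hDso, hDr, hCD⟩ := hD'
    rw [claim2 D hD, card_diff_filter C D hCD, hDr, hCr]
    have h2 : (2:ℕ) ^ (j+1) = 2 ^ j * 2 := pow_succ 2 j
    omega
  rw [Finset.sum_congr rfl hfib, Finset.sum_const, smul_eq_mul] at hcount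
  have hscard : s.card = 2 ^ (2 * n - j) - 2 ^ j := by
    have := card_diff_filter C W hCW
    rw [finrank_orth, hCr] at this
    exact this
  have hNat : Nat.card {D : Submodule (ZMod 2) (Vn n) //
      SelfOrth D ∧ Module.finrank (ZMod 2) D = j + 1 ∧ C ≤ D} = t.card := by
    rw [Nat.card_eq_fintype_card, ht]
    exact Fintype.card_subtype _
  rw [hNat, ← hcount, hscard]
end Ext
section Step
open Module Finset
variable {n : ℕ}

lemma extension_count' (j : ℕ) (hj : j ≤ n) (C : Submodule (ZMod 2) (Vn n)) (hC : SelfOrth C)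
    (hCr : Module.finrank (ZMod 2) C = j) :
    Nat.card {D : Submodule (ZMod 2) (Vn n) //
        SelfOrth D ∧ Module.finrank (ZMod 2) D = j + 1 ∧ C ≤ D}
      = 2 ^ (2 * (n - j)) - 1 := by
  have h := extension_count j C hC hCr
  have e1 : 2 * n - j = 2 * (n - j) + j := by omega
  rw [e1, pow_add] at h
  have h2 : Nat.card {D : Submodule (ZMod 2) (Vn n) //
        SelfOrth D ∧ Module.finrank (ZMod 2) D = j + 1 ∧ C ≤ D} * 2 ^ j
      = (2 ^ (2 * (n - j)) - 1) * 2 ^ j := by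
    rw [Nat.sub_mul, one_mul, h]
  exact Nat.eq_of_mul_eq_mul_right (Nat.pow_pos (by norm_num : 0 < 2)) h2

lemma step_eq (j : ℕ) (hjn : j ≤ n) (v : Vn n) (hv : v ≠ 0) :
    Nat.card {C : Submodule (ZMod 2) (Vn n) //
        SelfOrth C ∧ Module.finrank (ZMod 2) C = j + 1 ∧ v ∈ C} * (2 ^ j - 1)
      = Nat.card {C : Submodule (ZMod 2) (Vn n) //
        SelfOrth C ∧ Module.finrank (ZMod 2) C = j ∧ v ∈ C} * (2 ^ (2 * (n - j)) - 1) := by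
  classical
  set t1 : Finset (Submodule (ZMod 2) (Vn n)) := Finset.univ.filter
    (fun C => SelfOrth C ∧ Module.finrank (ZMod 2) C = j ∧ v ∈ C) with ht1
  set t2 : Finset (Submodule (ZMod 2) (Vn n)) := Finset.univ.filter
    (fun D => SelfOrth D ∧ Module.finrank (ZMod 2) D = j + 1 ∧ v ∈ D) with ht2
  set A : Finset (Submodule (ZMod 2) (Vn n) × Submodule (ZMod 2) (Vn n)) :=
    Finset.univ.filter (fun p =>
      (SelfOrth p.1 ∧ Module.finrank (ZMod 2) p.1 = j ∧ v ∈ p.1) ∧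
      (SelfOrth p.2 ∧ Module.finrank (ZMod 2) p.2 = j + 1 ∧ v ∈ p.2) ∧ p.1 ≤ p.2) with hA
  -- count A fiberwise over second coordinate
  have hmap2 : ∀ p ∈ A, p.2 ∈ t2 := by
    intro p hp
    rw [hA, Finset.mem_filter] at hp
    rw [ht2, Finset.mem_filter]
    exact ⟨Finset.mem_univ _, hp.2.2.1⟩
  have hcount2 := Finset.card_eq_sum_card_fiberwise hmap2
  have hfib2 : ∀ D ∈ t2, (A.filter (fun p => p.2 = D)).card = 2 ^ j - 1 := by
    intro D hD
    rw [ht2, Finset.mem_filter] at hD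
    obtain ⟨-, hDso, hDr, hvD⟩ := hD
    have hbij : (A.filter (fun p => p.2 = D)).card
        = (Finset.univ.filter (fun C : Submodule (ZMod 2) (Vn n) =>
            C ≤ D ∧ Module.finrank (ZMod 2) C = j ∧ v ∈ C)).card := by
      apply Finset.card_bij (fun p _ => p.1)
      · intro p hp
        simp only [hA, Finset.filter_filter, Finset.mem_filter, Finset.mem_univ, true_and] at hp
        simp only [Finset.mem_filter, Finset.mem_univ, true_and]
        exact ⟨hp.2 ▸ hp.1.2.2, hp.1.1.2⟩
      · intro p hp q hq h
        simp only [hA, Finset.filter_filter, Finset.mem_filter, Finset.mem_univ, true_and] at hp hq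
        exact Prod.ext h (hp.2.trans hq.2.symm)
      · intro C hC
        simp only [Finset.mem_filter, Finset.mem_univ, true_and] at hC
        obtain ⟨hCD, hCr, hvC⟩ := hC
        have hCso : SelfOrth C := fun a ha b hb => hDso a (hCD ha) b (hCD hb)
        refine ⟨(C, D), ?_, rfl⟩
        simp only [hA, Finset.filter_filter, Finset.mem_filter, Finset.mem_univ, true_and]
        exact ⟨⟨⟨hCso, hCr, hvC⟩, ⟨hDso, hDr, hvD⟩, hCD⟩, trivial⟩
    rw [hbij]
    have hcard := card_hyperplanes_in D v hvD hv
    rw [Nat.card_eq_fintype_card, Fintype.card_subtype] at hcard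
    have hpred : (Finset.univ.filter (fun C : Submodule (ZMod 2) (Vn n) =>
          C ≤ D ∧ Module.finrank (ZMod 2) C = Module.finrank (ZMod 2) D - 1 ∧ v ∈ C))
        = (Finset.univ.filter (fun C : Submodule (ZMod 2) (Vn n) =>
            C ≤ D ∧ Module.finrank (ZMod 2) C = j ∧ v ∈ C)) := by
      apply Finset.filter_congr
      intro C _
      rw [hDr]
      simp
    rw [hpred] at hcard
    rw [hcard, hDr]
    simp
  -- count A fiberwise over first coordinate
  have hmap1 : ∀ p ∈ A, p.1 ∈ t1 := by
    intro p hp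
    rw [hA, Finset.mem_filter] at hp
    rw [ht1, Finset.mem_filter]
    exact ⟨Finset.mem_univ _, hp.2.1⟩
  have hcount1 := Finset.card_eq_sum_card_fiberwise hmap1
  have hfib1 : ∀ C ∈ t1, (A.filter (fun p => p.1 = C)).card = 2 ^ (2 * (n - j)) - 1 := by
    intro C hC
    rw [ht1, Finset.mem_filter] at hC
    obtain ⟨-, hCso, hCr, hvC⟩ := hC
    have hbij : (A.filter (fun p => p.1 = C)).card
        = (Finset.univ.filter (fun D : Submodule (ZMod 2) (Vn n) =>
            SelfOrth D ∧ Module.finrank (ZMod 2) D = j + 1 ∧ C ≤ D)).card := by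
      apply Finset.card_bij (fun p _ => p.2)
      · intro p hp
        simp only [hA, Finset.filter_filter, Finset.mem_filter, Finset.mem_univ, true_and] at hp
        simp only [Finset.mem_filter, Finset.mem_univ, true_and]
        exact ⟨hp.1.2.1.1, hp.1.2.1.2.1, hp.2 ▸ hp.1.2.2⟩
      · intro p hp q hq h
        simp only [hA, Finset.filter_filter, Finset.mem_filter, Finset.mem_univ, true_and] at hp hq
        exact Prod.ext (hp.2.trans hq.2.symm) h
      · intro D hD
        simp only [Finset.mem_filter, Finset.mem_univ, true_and] at hD
        obtain ⟨hDso, hDr, hCD⟩ := hD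
        refine ⟨(C, D), ?_, rfl⟩
        simp only [hA, Finset.filter_filter, Finset.mem_filter, Finset.mem_univ, true_and]
        exact ⟨⟨⟨hCso, hCr, hvC⟩, ⟨hDso, hDr, hCD hvC⟩, hCD⟩, trivial⟩
    rw [hbij]
    have hcard := extension_count' j hjn C hCso hCr
    rw [Nat.card_eq_fintype_card, Fintype.card_subtype] at hcard
    exact hcard
  rw [Finset.sum_congr rfl hfib2, Finset.sum_const, smul_eq_mul] at hcount2
  rw [Finset.sum_congr rfl hfib1, Finset.sum_const, smul_eq_mul] at hcount1
  have hN2 : Nat.card {C : Submodule (ZMod 2) (Vn n) //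
      SelfOrth C ∧ Module.finrank (ZMod 2) C = j + 1 ∧ v ∈ C} = t2.card := by
    rw [Nat.card_eq_fintype_card, ht2]
    exact Fintype.card_subtype _
  have hN1 : Nat.card {C : Submodule (ZMod 2) (Vn n) //
      SelfOrth C ∧ Module.finrank (ZMod 2) C = j ∧ v ∈ C} = t1.card := by
    rw [Nat.card_eq_fintype_card, ht1]
    exact Fintype.card_subtype _
  rw [hN1, hN2, ← hcount1, ← hcount2]
end Step
section Final
open Module Finset
variable {n : ℕ}

lemma base_case (v : Vn n) (hv : v ≠ 0) :
    Nat.card {C : Submodule (ZMod 2) (Vn n) //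
        SelfOrth C ∧ Module.finrank (ZMod 2) C = 1 ∧ v ∈ C} = 1 := by
  have hso : SelfOrth (Submodule.span (ZMod 2) {v}) := by
    intro a ha b hb
    obtain ⟨c, hc⟩ := Submodule.mem_span_singleton.1 ha
    obtain ⟨d, hd⟩ := Submodule.mem_span_singleton.1 hb
    rw [← hc, ← hd, trF_smul_left, trF_comm, trF_smul_left, trF_comm, trF_self]
    simp
  have hr : Module.finrank (ZMod 2) (Submodule.span (ZMod 2) {v}) = 1 :=
    finrank_span_singleton hv
  have hmem : v ∈ Submodule.span (ZMod 2) {v} := Submodule.mem_span_singleton_self v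
  have huniq : ∀ C : Submodule (ZMod 2) (Vn n),
      SelfOrth C ∧ Module.finrank (ZMod 2) C = 1 ∧ v ∈ C →
      C = Submodule.span (ZMod 2) {v} := by
    rintro C ⟨-, hCr, hvC⟩
    symm
    apply Submodule.eq_of_le_of_finrank_le
    · rw [Submodule.span_le, Set.singleton_subset_iff]; exact hvC
    · rw [hr, hCr]
  haveI : Unique {C : Submodule (ZMod 2) (Vn n) //
      SelfOrth C ∧ Module.finrank (ZMod 2) C = 1 ∧ v ∈ C} := by
    refine ⟨⟨⟨Submodule.span (ZMod 2) {v}, hso, hr, hmem⟩⟩, ?_⟩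
    rintro ⟨C, hC⟩
    exact Subtype.ext (huniq C hC)
  exact Nat.card_unique

lemma main_aux (j : ℕ) (hjn : j + 1 ≤ n) (v : Vn n) (hv : v ≠ 0) :
    Nat.card {C : Submodule (ZMod 2) (Vn n) //
        SelfOrth C ∧ Module.finrank (ZMod 2) C = j + 1 ∧ v ∈ C} *
      ∏ i ∈ Finset.Icc 1 j, (2 ^ i - 1) =
    ∏ i ∈ Finset.Icc 1 j, (2 ^ (2 * (n - i)) - 1) := by
  induction j with
  | zero => simp [base_case v hv]
  | succ j ih =>
    have hj1 : j + 1 ≤ n := by omega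
    have ih' := ih hj1
    rw [Finset.prod_Icc_succ_top (by omega : 1 ≤ j + 1),
      Finset.prod_Icc_succ_top (by omega : 1 ≤ j + 1)]
    have hstep := step_eq (j + 1) hj1 v hv
    calc Nat.card {C : Submodule (ZMod 2) (Vn n) //
          SelfOrth C ∧ Module.finrank (ZMod 2) C = j + 1 + 1 ∧ v ∈ C} *
        ((∏ i ∈ Finset.Icc 1 j, (2 ^ i - 1)) * (2 ^ (j + 1) - 1))
        = (Nat.card {C : Submodule (ZMod 2) (Vn n) //
            SelfOrth C ∧ Module.finrank (ZMod 2) C = j + 1 + 1 ∧ v ∈ C} *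
          (2 ^ (j + 1) - 1)) * ∏ i ∈ Finset.Icc 1 j, (2 ^ i - 1) := by ring
      _ = (Nat.card {C : Submodule (ZMod 2) (Vn n) //
            SelfOrth C ∧ Module.finrank (ZMod 2) C = j + 1 ∧ v ∈ C} *
          (2 ^ (2 * (n - (j + 1))) - 1)) * ∏ i ∈ Finset.Icc 1 j, (2 ^ i - 1) := by
            rw [hstep]
      _ = (Nat.card {C : Submodule (ZMod 2) (Vn n) //
            SelfOrth C ∧ Module.finrank (ZMod 2) C = j + 1 ∧ v ∈ C} *
          ∏ i ∈ Finset.Icc 1 j, (2 ^ i - 1)) * (2 ^ (2 * (n - (j + 1))) - 1) := by ring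
      _ = (∏ i ∈ Finset.Icc 1 j, (2 ^ (2 * (n - i)) - 1)) * (2 ^ (2 * (n - (j + 1))) - 1) := by
            rw [ih']
end Final


/-- the number σ_k of self-orthogonal additive codes of length n
and F_2-dimension k containing a fixed nonzero vector v satisfies
σ_k = ∏_{i=1}^{k-1} (2^{2(n-i)} - 1)/(2^i - 1), stated in the cross-multiplied
(fraction-free) form. -/
theorem count_self_orthogonal_containing (n k : ℕ) (hk1 : 1 ≤ k) (hkn : k ≤ n)
    (v : Fin n → F4) (hv : v ≠ 0) :
    Nat.card {C : Submodule (ZMod 2) (Fin n → F4) //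
        SelfOrth C ∧ Module.finrank (ZMod 2) C = k ∧ v ∈ C} *
      ∏ i ∈ Finset.Icc 1 (k - 1), (2 ^ i - 1) =
    ∏ i ∈ Finset.Icc 1 (k - 1), (2 ^ (2 * (n - i)) - 1) := by
  obtain ⟨j, rfl⟩ : ∃ j, k = j + 1 := ⟨k - 1, by omega⟩
  simpa using main_aux j hkn v hv
end

section
/- Let C be a linear code over F_{2^m} that is self-orthogonal with respect to the standard inner product, and let B = {b_1,...,b_m} be a self-dual basis of F_{2^m} over F_2 (i.e., Tr(b_i b_j) = δ_ij). Then the binary expansion B(C) ⊆ F_2^{nm} of C is self-orthogonal with respect to the standard binary inner product. -/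
/-- the binary expansion of a self-orthogonal linear code over
F_{2^m} with respect to a self-dual basis is self-orthogonal with respect to
the standard binary inner product. -/
theorem binary_expansion_self_orthogonal (m n : ℕ) (hm : 0 < m)
    (C : Submodule (GaloisField 2 m) (Fin n → GaloisField 2 m))
    (hC : ∀ u ∈ C, ∀ v ∈ C, ∑ i, u i * v i = 0)
    (b : Fin m → GaloisField 2 m)
    (hbasis : LinearIndependent (ZMod 2) b)
    (hb : ∀ i j, Algebra.trace (ZMod 2) (GaloisField 2 m) (b i * b j)
            = if i = j then 1 else 0) :
    ∀ u v : Fin n → Fin m → ZMod 2,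
      (fun i => ∑ j, u i j • b j) ∈ C →
      (fun i => ∑ j, v i j • b j) ∈ C →
      ∑ i, ∑ j, u i j * v i j = 0 := by
  intro u v hu hv
  have h0 := hC _ hu _ hv
  have key : ∀ (a c : Fin m → ZMod 2),
      Algebra.trace (ZMod 2) (GaloisField 2 m) ((∑ j, a j • b j) * (∑ k, c k • b k))
        = ∑ j, a j * c j := by
    intro a c
    rw [Finset.sum_mul_sum]
    have hterm : ∀ j k, (a j • b j) * (c k • b k) = (a j * c k) • (b j * b k) := by
      intro j k
      rw [smul_mul_smul_comm]
    simp only [hterm, map_sum, map_smul, hb, smul_eq_mul, mul_ite, mul_one, mul_zero]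
    simp [Finset.sum_ite_eq']
  calc ∑ i, ∑ j, u i j * v i j
      = ∑ i, Algebra.trace (ZMod 2) (GaloisField 2 m)
          ((∑ j, u i j • b j) * (∑ k, v i k • b k)) := by
        exact Finset.sum_congr rfl fun i _ => (key (u i) (v i)).symm
    _ = Algebra.trace (ZMod 2) (GaloisField 2 m)
          (∑ i, (∑ j, u i j • b j) * (∑ k, v i k • b k)) := by rw [map_sum]
    _ = 0 := by rw [h0, map_zero]
end
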